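/- Consider n agents with cost functions c_i : [0,1] → [0,∞), c_i(0) = 0, such that x − c_i(x) attains its maximum y_i over [0,1] at a point x_i, and suppose y_1 ≤ y_2 ≤ … ≤ y_n. Let i* ∈ {1,…,n} maximize (n − i + 1)·y_i and define t*(x) = max(0, x − y_{i*}) on [0,1]. Then there exist best responses x''_1,…,x''_n of the agents to t* such that for every payment function t : [0,1] → ℝ with t(0) ≥ 0 for which each agent has a best response, and every best responses x'_1,…,x'_n to t, the principal's payoffs satisfy Σ_{i=1}^n ( x'_i − t(x'_i) ) ≤ ( Σ_{k=1}^n 1/k ) · Σ_{i=1}^n ( x''_i − t*(x''_i) ). In other words, the payment function t* is a (Σ_{k=1}^n 1/k)-approximation, i.e. an O(log n)-approximation, to the optimal principal payoff. -/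

import Mathlib

/-- With `y_1 ≤ … ≤ y_n`, `i*` maximizing `(n-i+1)·y_i`, and
`t*(x) = max(0, x - y_{i*})`, there exist best responses to `t*` under which the principal's
payoff is within a factor `Σ_{k=1}^n 1/k` (i.e. `O(log n)`) of the payoff obtained under any
payment function `t` with `t(0) ≥ 0` and any best responses to `t`. -/
theorem stmt_11 (n : ℕ) (hn : 1 ≤ n) (c : ℕ → ℝ → ℝ) (y xm : ℕ → ℝ) (istar : ℕ)
    (hc0 : ∀ i, 1 ≤ i → i ≤ n → c i 0 = 0)
    (hcnn : ∀ i, 1 ≤ i → i ≤ n → ∀ x ∈ Set.Icc (0:ℝ) 1, 0 ≤ c i x)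
    (hxm : ∀ i, 1 ≤ i → i ≤ n → xm i ∈ Set.Icc (0:ℝ) 1 ∧
      xm i - c i (xm i) = y i ∧ ∀ x ∈ Set.Icc (0:ℝ) 1, x - c i x ≤ y i)
    (hymono : ∀ i, 1 ≤ i → i < n → y i ≤ y (i + 1))
    (histar1 : 1 ≤ istar) (histarn : istar ≤ n)
    (hopt : ∀ i, 1 ≤ i → i ≤ n →
      ((n : ℝ) - i + 1) * y i ≤ ((n : ℝ) - istar + 1) * y istar)
    (tstar : ℝ → ℝ) (htstar : ∀ x ∈ Set.Icc (0:ℝ) 1, tstar x = max 0 (x - y istar)) :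
    ∃ xs : ℕ → ℝ,
      (∀ i, 1 ≤ i → i ≤ n → xs i ∈ Set.Icc (0:ℝ) 1 ∧
        ∀ x ∈ Set.Icc (0:ℝ) 1, tstar x - c i x ≤ tstar (xs i) - c i (xs i)) ∧
      ∀ (t : ℝ → ℝ) (xs' : ℕ → ℝ), 0 ≤ t 0 →
        (∀ i, 1 ≤ i → i ≤ n → xs' i ∈ Set.Icc (0:ℝ) 1 ∧
          ∀ x ∈ Set.Icc (0:ℝ) 1, t x - c i x ≤ t (xs' i) - c i (xs' i)) →
        ∑ i ∈ Finset.Icc 1 n, (xs' i - t (xs' i)) ≤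
          (∑ k ∈ Finset.Icc 1 n, (1 : ℝ) / k) *
            ∑ i ∈ Finset.Icc 1 n, (xs i - tstar (xs i)) := by
  classical
  have h01 : (0:ℝ) ∈ Set.Icc (0:ℝ) 1 := by norm_num
  have hy0 : ∀ i, 1 ≤ i → i ≤ n → 0 ≤ y i := by
    intro i h1 h2
    have h := (hxm i h1 h2).2.2 0 h01
    rw [hc0 i h1 h2] at h
    linarith
  have hmono : ∀ i j, 1 ≤ i → i ≤ j → j ≤ n → y i ≤ y j := by
    intro i j h1 hij hjn
    induction j, hij using Nat.le_induction with
    | base => exact le_refl _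
    | succ j hj ih =>
      have h' : y i ≤ y j := ih (Nat.le_of_succ_le hjn)
      exact le_trans h' (hymono j (le_trans h1 hj) (Nat.lt_of_succ_le hjn))
  set Y := y istar with hYdef
  have hY0 : 0 ≤ Y := hy0 istar histar1 histarn
  refine ⟨fun i => if istar ≤ i then xm i else 0, ?_, ?_⟩
  · intro i h1 h2
    by_cases hi : istar ≤ i
    · simp only [if_pos hi]
      obtain ⟨hmem, heq, hmax⟩ := hxm i h1 h2
      have hYi : Y ≤ y i := hmono istar i histar1 hi h2
      have hcnn' : 0 ≤ c i (xm i) := hcnn i h1 h2 _ hmem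
      have hts : tstar (xm i) = xm i - Y := by
        rw [htstar _ hmem, max_eq_right]; linarith
      refine ⟨hmem, fun x hx => ?_⟩
      rw [htstar x hx, hts]
      have hcx : 0 ≤ c i x := hcnn i h1 h2 x hx
      have hyx : x - c i x ≤ y i := hmax x hx
      have hmx : max 0 (x - Y) ≤ (y i - Y) + c i x := by
        apply max_le <;> linarith
      linarith
    · simp only [if_neg hi]
      have hYi : y i ≤ Y := hmono i istar h1 (le_of_not_ge hi) histarn
      have hts0 : tstar 0 = 0 := by
        rw [htstar 0 h01, max_eq_left (by linarith)]
      refine ⟨h01, fun x hx => ?_⟩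
      rw [htstar x hx, hts0, hc0 i h1 h2]
      have hcx : 0 ≤ c i x := hcnn i h1 h2 x hx
      have hyx : x - c i x ≤ y i := (hxm i h1 h2).2.2 x hx
      have hmx : max 0 (x - Y) ≤ c i x := max_le hcx (by linarith)
      linarith
  · intro t xs' ht0 hbr
    -- each term under t is at most y i
    have hterm : ∀ i ∈ Finset.Icc 1 n, xs' i - t (xs' i) ≤ y i := by
      intro i hi
      simp only [Finset.mem_Icc] at hi
      obtain ⟨hmem, hbest⟩ := hbr i hi.1 hi.2
      have h0 := hbest 0 h01
      rw [hc0 i hi.1 hi.2] at h0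
      have hmax := (hxm i hi.1 hi.2).2.2 (xs' i) hmem
      linarith
    -- the principal payoff under tstar equals (n - istar + 1) * Y
    have hS : ∑ i ∈ Finset.Icc 1 n,
        ((if istar ≤ i then xm i else 0) - tstar (if istar ≤ i then xm i else 0))
        = ((n:ℝ) - istar + 1) * Y := by
      have hcong : ∀ i ∈ Finset.Icc 1 n,
          (if istar ≤ i then xm i else 0) - tstar (if istar ≤ i then xm i else 0)
          = if istar ≤ i then Y else 0 := by
        intro i hi
        simp only [Finset.mem_Icc] at hi
        by_cases hii : istar ≤ i
        · simp only [if_pos hii]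
          obtain ⟨hmem, heq, _⟩ := hxm i hi.1 hi.2
          have hYi : Y ≤ y i := hmono istar i histar1 hii hi.2
          have hcnn' : 0 ≤ c i (xm i) := hcnn i hi.1 hi.2 _ hmem
          rw [htstar _ hmem, max_eq_right (by linarith)]
          ring
        · simp only [if_neg hii]
          rw [htstar 0 h01, max_eq_left (by linarith)]
          ring
      rw [Finset.sum_congr rfl hcong, Finset.sum_ite, Finset.sum_const,
        Finset.sum_const_zero, add_zero]
      have hfil : (Finset.Icc 1 n).filter (fun i => istar ≤ i) = Finset.Icc istar n := by
        ext j
        simp only [Finset.mem_filter, Finset.mem_Icc]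
        omega
      rw [hfil, Nat.card_Icc, nsmul_eq_mul]
      congr 1
      have : istar ≤ n + 1 := by omega
      push_cast [this]
      ring
    -- reindexing sum
    have h3 : ∑ i ∈ Finset.Icc 1 n, 1/((n:ℝ) - i + 1) = ∑ k ∈ Finset.Icc 1 n, (1:ℝ)/k := by
      apply Finset.sum_nbij' (fun a => n + 1 - a) (fun a => n + 1 - a)
      · intro a ha; simp only [Finset.mem_Icc] at *; omega
      · intro a ha; simp only [Finset.mem_Icc] at *; omega
      · intro a ha; simp only [Finset.mem_Icc] at ha; omega
      · intro a ha; simp only [Finset.mem_Icc] at ha; omega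
      · intro a ha
        simp only [Finset.mem_Icc] at ha
        have hc : ((n + 1 - a : ℕ) : ℝ) = (n:ℝ) + 1 - a := by
          have : a ≤ n + 1 := by omega
          push_cast [this]; ring
        rw [hc]
        congr 1
        ring
    set C := ((n:ℝ) - istar + 1) * Y with hC
    have hsum1 : ∑ i ∈ Finset.Icc 1 n, (xs' i - t (xs' i)) ≤ ∑ i ∈ Finset.Icc 1 n, y i :=
      Finset.sum_le_sum hterm
    have hsum2 : ∑ i ∈ Finset.Icc 1 n, y i ≤ ∑ i ∈ Finset.Icc 1 n, C * (1/((n:ℝ) - i + 1)) := by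
      apply Finset.sum_le_sum
      intro i hi
      simp only [Finset.mem_Icc] at hi
      have hd : (0:ℝ) < (n:ℝ) - i + 1 := by
        have : (i:ℝ) ≤ n := by exact_mod_cast hi.2
        linarith
      rw [mul_one_div, le_div_iff₀ hd]
      have := hopt i hi.1 hi.2
      nlinarith [this]
    have hsum3 : ∑ i ∈ Finset.Icc 1 n, C * (1/((n:ℝ) - i + 1))
        = (∑ k ∈ Finset.Icc 1 n, (1:ℝ)/k) * C := by
      rw [← Finset.mul_sum, h3, mul_comm]
    calc ∑ i ∈ Finset.Icc 1 n, (xs' i - t (xs' i))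
        ≤ ∑ i ∈ Finset.Icc 1 n, C * (1/((n:ℝ) - i + 1)) := le_trans hsum1 hsum2
      _ = (∑ k ∈ Finset.Icc 1 n, (1:ℝ)/k) * C := hsum3
      _ = (∑ k ∈ Finset.Icc 1 n, (1:ℝ)/k) *
            ∑ i ∈ Finset.Icc 1 n,
              ((if istar ≤ i then xm i else 0) - tstar (if istar ≤ i then xm i else 0)) := by
          rw [hS]
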